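/- Let f : (0,∞) → ℝ be concave with sign(f(x)) = sign(x−1), and suppose t ↦ f(1/t) is integrable over (0,1]. Then the equation ∫₀¹ f(1/(cx)) dx = 0 has a unique solution c, and this solution satisfies c ∈ (1, ∞). -/

import Mathlib

set_option maxHeartbeats 1000000

open MeasureTheory

/-- The equation `∫₀¹ f(1/(cx)) dx = 0` has a unique positive solution `c`,
and it lies in `(1,∞)`. -/
theorem stmt_10 (f : ℝ → ℝ) (hconc : ConcaveOn ℝ (Set.Ioi 0) f)
    (hneg : ∀ x : ℝ, 0 < x → x < 1 → f x < 0)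
    (hone : f 1 = 0)
    (hposf : ∀ x : ℝ, 1 < x → 0 < f x)
    (hint : IntegrableOn (fun t => f (1 / t)) (Set.Ioc 0 1)) :
    ∃ c : ℝ, 1 < c ∧ (∫ x in Set.Ioc (0:ℝ) 1, f (1 / (c * x))) = 0 ∧
      ∀ c' : ℝ, 0 < c' → (∫ x in Set.Ioc (0:ℝ) 1, f (1 / (c' * x))) = 0 → c' = c := by
  set g : ℝ → ℝ := fun u => f (1 / u) with hgdef
  have hfc : ContinuousOn f (Set.Ioi 0) := hconc.continuousOn isOpen_Ioi
  have hgc : ContinuousOn g (Set.Ioi 0) := by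
    apply hfc.comp (f := fun u : ℝ => 1 / u)
    · exact continuousOn_const.div continuousOn_id fun x hx => ne_of_gt hx
    · intro x hx
      exact one_div_pos.mpr (Set.mem_Ioi.mp hx)
  have hg1 : g 1 = 0 := by simp [hgdef, hone]
  have hgpos : ∀ u : ℝ, 0 < u → u < 1 → 0 < g u := fun u hu hu1 =>
    hposf _ (one_lt_one_div hu hu1)
  have hgneg : ∀ u : ℝ, 1 < u → g u < 0 := fun u hu =>
    hneg _ (one_div_pos.mpr (lt_trans one_pos hu)) ((div_lt_one (lt_trans one_pos hu)).mpr hu)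
  have hgnn : ∀ u : ℝ, 0 < u → u ≤ 1 → 0 ≤ g u := by
    intro u hu hu1
    rcases eq_or_lt_of_le hu1 with h | h
    · rw [h, hg1]
    · exact (hgpos u hu h).le
  -- integrability on compacts away from 0
  have hIcc : ∀ a b : ℝ, 0 < a → IntegrableOn g (Set.Icc a b) := by
    intro a b ha
    refine (hgc.mono ?_).integrableOn_Icc
    intro x hx; exact lt_of_lt_of_le ha hx.1
  have hgint : ∀ a : ℝ, 1 ≤ a → IntegrableOn g (Set.Ioc 0 a) := by
    intro a ha
    have : Set.Ioc (0:ℝ) 1 ∪ Set.Ioc 1 a = Set.Ioc 0 a :=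
      Set.Ioc_union_Ioc_eq_Ioc zero_le_one ha
    rw [← this]
    exact hint.union ((hIcc 1 a one_pos).mono_set Set.Ioc_subset_Icc_self)
  set Φ : ℝ → ℝ := fun c => ∫ u in Set.Ioc (0:ℝ) c, g u with hΦdef
  have hsplitgen : ∀ a b : ℝ, 1 ≤ a → a ≤ b → Φ b = Φ a + ∫ u in Set.Ioc a b, g u := by
    intro a b ha hab
    simp only [hΦdef]
    rw [← Set.Ioc_union_Ioc_eq_Ioc (le_trans zero_le_one ha) hab]
    exact setIntegral_union (Set.Ioc_disjoint_Ioc_of_le le_rfl) measurableSet_Ioc (hgint a ha)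
      ((hIcc a b (lt_of_lt_of_le one_pos ha)).mono_set Set.Ioc_subset_Icc_self)
  -- reduction via substitution u = c x
  have hred : ∀ c : ℝ, 0 < c →
      (∫ x in Set.Ioc (0:ℝ) 1, f (1 / (c * x))) = c⁻¹ * Φ c := by
    intro c hc
    have h1 : (∫ x in Set.Ioc (0:ℝ) 1, f (1 / (c * x))) = ∫ x in (0:ℝ)..1, g (c * x) := by
      rw [intervalIntegral.integral_of_le zero_le_one]
    rw [h1, intervalIntegral.integral_comp_mul_left g hc.ne', mul_zero, mul_one,
      intervalIntegral.integral_of_le hc.le, smul_eq_mul]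
  -- Φ positive on (0,1]
  have hΦpos : ∀ c : ℝ, 0 < c → c ≤ 1 → 0 < Φ c := by
    intro c hc hc1
    have hi : IntegrableOn g (Set.Ioc 0 c) :=
      hint.mono_set (Set.Ioc_subset_Ioc le_rfl hc1)
    have hnn : 0 ≤ᵐ[volume.restrict (Set.Ioc 0 c)] g := by
      filter_upwards [ae_restrict_mem measurableSet_Ioc] with u hu
      exact hgnn u hu.1 (hu.2.trans hc1)
    rw [hΦdef]
    refine (setIntegral_pos_iff_support_of_nonneg_ae hnn hi).mpr ?_
    have hsub : Set.Ioo (0:ℝ) c ⊆ Function.support g ∩ Set.Ioc 0 c := by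
      intro u hu
      exact ⟨ne_of_gt (hgpos u hu.1 (hu.2.trans_le hc1)), hu.1, hu.2.le⟩
    calc (0:ENNReal) < ENNReal.ofReal c := by simpa using hc
      _ = volume (Set.Ioo (0:ℝ) c) := by rw [Real.volume_Ioo, sub_zero]
      _ ≤ _ := measure_mono hsub
  -- Φ strictly decreasing on [1, ∞)
  have hΦmono : ∀ a b : ℝ, 1 ≤ a → a < b → Φ b < Φ a := by
    intro a b ha hab
    have hsplit : Φ b = Φ a + ∫ u in Set.Ioc a b, g u := hsplitgen a b ha hab.le
    have hcont : ContinuousOn (fun u => -g u) (Set.Icc a b) := by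
      refine (hgc.mono ?_).neg
      intro x hx; exact lt_of_lt_of_le (lt_of_lt_of_le one_pos ha) hx.1
    have hii : IntervalIntegrable (fun u => -g u) volume a b :=
      hcont.intervalIntegrable_of_Icc hab.le
    have hpos : 0 < ∫ u in a..b, -g u := by
      refine intervalIntegral.intervalIntegral_pos_of_pos_on hii ?_ hab
      intro x hx
      simpa using hgneg x (lt_of_le_of_lt ha hx.1)
    rw [intervalIntegral.integral_neg] at hpos
    rw [intervalIntegral.integral_of_le hab.le] at hpos
    linarith [hsplit]
  -- Φ eventually negative
  set β : ℝ := f (1 / 2) with hβdef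
  have hβ : β < 0 := hneg _ (by norm_num) (by norm_num)
  have hconcbound : ∀ u : ℝ, 2 ≤ u → g u ≤ β := by
    intro u hu
    have hu0 : (0:ℝ) < u := by linarith
    set x : ℝ := 1 / u with hx
    have hx0 : 0 < x := one_div_pos.mpr hu0
    have hxh : x ≤ 1 / 2 := by
      rw [hx]
      exact one_div_le_one_div_of_le (by norm_num) hu
    set l : ℝ := (1 / 2) / (1 - x) with hl
    have h1x : (1:ℝ) / 2 ≤ 1 - x := by linarith
    have hl0 : 0 < l := div_pos (by norm_num) (by linarith)
    have hl1 : l ≤ 1 := (div_le_one (by linarith)).mpr h1x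
    have hkey : l * f x + (1 - l) * f 1 ≤ f (l * x + (1 - l) * 1) :=
      hconc.2 (Set.mem_Ioi.mpr hx0) (Set.mem_Ioi.mpr one_pos) hl0.le (by linarith)
        (by ring)
    have harg : l * x + (1 - l) * 1 = 1 / 2 := by
      rw [hl]
      field_simp
      ring
    rw [harg, hone, mul_zero, add_zero] at hkey
    have : g u = f x := rfl
    rw [this]
    nlinarith [hkey, hl0, hl1, hβ]
  set M : ℝ := 3 + Φ 1 / (-β) with hM
  have hΦ1 : 0 < Φ 1 := hΦpos 1 one_pos le_rfl
  have hM3 : 3 < M := by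
    have h : 0 < Φ 1 / (-β) := div_pos hΦ1 (by linarith)
    rw [hM]
    linarith
  have hΦM : Φ M < 0 := by
    have hsplit : Φ M = Φ 1 + (∫ u in Set.Ioc (1:ℝ) 2, g u) + ∫ u in Set.Ioc (2:ℝ) M, g u := by
      rw [hsplitgen 2 M one_le_two (by linarith), hsplitgen 1 2 le_rfl one_le_two]
    have h12 : (∫ u in Set.Ioc (1:ℝ) 2, g u) ≤ 0 := by
      refine setIntegral_nonpos measurableSet_Ioc fun u hu => ?_
      exact (hgneg u hu.1).le
    have h2M : (∫ u in Set.Ioc (2:ℝ) M, g u) ≤ (M - 2) * β := by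
      have : (∫ u in Set.Ioc (2:ℝ) M, (fun _ => β) u) = (M - 2) * β := by
        rw [setIntegral_const, Real.volume_real_Ioc_of_le (by linarith), smul_eq_mul]
      rw [← this]
      refine setIntegral_mono_on ((hIcc 2 M two_pos).mono_set Set.Ioc_subset_Icc_self)
        (integrableOn_const (hs := by rw [Real.volume_Ioc]; exact ENNReal.ofReal_ne_top))
        measurableSet_Ioc fun u hu => hconcbound u hu.1.le
    have hMβ : (M - 2) * β = β - Φ 1 := by
      have hβ' : β ≠ 0 := hβ.ne
      have hc : Φ 1 / -β * -β = Φ 1 := div_mul_cancel₀ _ (neg_ne_zero.mpr hβ')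
      rw [hM]
      linear_combination -hc
    linarith
  -- continuity of Φ on [1, M]
  have hΦcont : ContinuousOn Φ (Set.Icc 1 M) := by
    have hI : IntegrableOn g (Set.Icc 0 M) := by
      rw [integrableOn_Icc_iff_integrableOn_Ioc]
      exact hgint M (by linarith)
    exact (intervalIntegral.continuousOn_primitive hI).mono (Set.Icc_subset_Icc (by norm_num) le_rfl)
  -- IVT
  obtain ⟨c, hc, hΦc⟩ : ∃ c ∈ Set.Ioo (1:ℝ) M, Φ c = 0 := by
    have := intermediate_value_Ioo' (le_of_lt (by linarith : (1:ℝ) < M)) hΦcont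
    have h0 : (0:ℝ) ∈ Set.Ioo (Φ M) (Φ 1) := ⟨hΦM, hΦ1⟩
    obtain ⟨c, hc, hΦc⟩ := this h0
    exact ⟨c, hc, hΦc⟩
  refine ⟨c, hc.1, ?_, ?_⟩
  · rw [hred c (lt_trans one_pos hc.1), hΦc, mul_zero]
  · intro c' hc' hint0
    rw [hred c' hc'] at hint0
    have hΦc' : Φ c' = 0 := by
      rcases mul_eq_zero.mp hint0 with h | h
      · exact absurd h (inv_ne_zero hc'.ne')
      · exact h
    by_contra hne
    have hc'1 : 1 < c' := by
      by_contra h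
      push_neg at h
      exact absurd hΦc' (ne_of_gt (hΦpos c' hc' h))
    rcases lt_or_gt_of_ne hne with h | h
    · have := hΦmono c' c hc'1.le h
      rw [hΦc, hΦc'] at this
      exact lt_irrefl 0 this
    · have := hΦmono c c' hc.1.le h
      rw [hΦc, hΦc'] at this
      exact lt_irrefl 0 this
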